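/- Let X be an almost discretely Lindelöf Hausdorff space with countable pseudocharacter (every point of X is the intersection of countably many open sets) and countable tightness (whenever x lies in the closure of a set A ⊆ X, there is a countable B ⊆ A with x in the closure of B). Then |X| ≤ 2^𝔠, where 𝔠 = 2^ℵ₀. -/

import Mathlib

open Set Topology Cardinal

universe u

/-- A space is almost discretely Lindelöf if every discrete subset is contained
in a Lindelöf subset. -/
def AlmostDiscretelyLindelof (X : Type u) [TopologicalSpace X] : Prop :=
  ∀ D : Set X, DiscreteTopology D → ∃ L : Set X, D ⊆ L ∧ IsLindelof L

/-- A space has countable pseudocharacter if every point is the intersection of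
countably many open sets. -/
def CountablePseudocharacter (X : Type u) [TopologicalSpace X] : Prop :=
  ∀ x : X, ∃ 𝒰 : Set (Set X), 𝒰.Countable ∧ (∀ U ∈ 𝒰, IsOpen U ∧ x ∈ U) ∧
    ⋂₀ 𝒰 = {x}

/-- A space has countable tightness if every point in the closure of a set lies
in the closure of a countable subset. -/
def CountableTightness (X : Type u) [TopologicalSpace X] : Prop :=
  ∀ (A : Set X) (x : X), x ∈ closure A →
    ∃ B ⊆ A, B.Countable ∧ x ∈ closure B

section Aux

variable {L : Type u} [TopologicalSpace L]

/-- Extract a function-valued pseudobase from countable pseudocharacter. -/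
lemma exists_pseudobase_fun (hpsi : CountablePseudocharacter L) :
    ∃ V : L → ℕ → Set L, ∀ x, (∀ n, IsOpen (V x n)) ∧ (∀ n, x ∈ V x n) ∧
      (⋂ n, V x n) = {x} := by
  have key : ∀ x : L, ∃ V : ℕ → Set L, (∀ n, IsOpen (V n)) ∧ (∀ n, x ∈ V n) ∧
      (⋂ n, V n) = {x} := by
    intro x
    obtain ⟨𝒰, hc, hmem, hint⟩ := hpsi x
    have hc' : (insert Set.univ 𝒰).Countable := hc.insert _
    obtain ⟨U, hU⟩ := hc'.exists_eq_range (insert_nonempty _ _)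
    have hmem' : ∀ n, U n ∈ insert Set.univ 𝒰 := by
      intro n; rw [hU]; exact mem_range_self n
    refine ⟨U, fun n => ?_, fun n => ?_, ?_⟩
    · rcases mem_insert_iff.mp (hmem' n) with h | h
      · rw [h]; exact isOpen_univ
      · exact (hmem _ h).1
    · rcases mem_insert_iff.mp (hmem' n) with h | h
      · rw [h]; exact mem_univ x
      · exact (hmem _ h).2
    · have h1 : (⋂ n, U n) = ⋂₀ (insert Set.univ 𝒰) := by rw [hU, sInter_range]
      rw [h1, sInter_insert, hint, univ_inter]
  choose V h1 h2 h3 using key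
  exact ⟨V, fun x => ⟨h1 x, h2 x, h3 x⟩⟩

/-- In a Lindelöf T2 space with countable pseudocharacter, every point has a countable
family of open neighborhoods whose closures intersect to the point. -/
lemma exists_closed_pseudobase [T2Space L] [LindelofSpace L]
    (hpsi : CountablePseudocharacter L) :
    ∃ W : L → ℕ → Set L, ∀ x, (∀ n, IsOpen (W x n)) ∧ (∀ n, x ∈ W x n) ∧
      (⋂ n, closure (W x n)) = {x} := by
  classical
  obtain ⟨V, hV⟩ := exists_pseudobase_fun hpsi
  have key : ∀ x : L, ∃ W : ℕ → Set L, (∀ n, IsOpen (W n)) ∧ (∀ n, x ∈ W n) ∧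
      (⋂ n, closure (W n)) = {x} := by
    intro x
    obtain ⟨hVo, hVm, hVi⟩ := hV x
    have sep : ∀ y : L, ∃ A Bx : Set L, IsOpen A ∧ IsOpen Bx ∧ x ∈ Bx ∧
        (y ≠ x → y ∈ A) ∧ A ∩ Bx = ∅ := by
      intro y
      by_cases hyx : y = x
      · exact ⟨∅, Set.univ, isOpen_empty, isOpen_univ, mem_univ x,
          fun h => absurd hyx h, empty_inter _⟩
      · obtain ⟨u, v, hu, hv, hxu, hyv, huv⟩ := t2_separation (Ne.symm hyx)
        exact ⟨v, u, hv, hu, hxu, fun _ => hyv,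
          disjoint_iff_inter_eq_empty.mp huv.symm⟩
    choose A Bx hAo hBo hxB hyA hAB using sep
    have cov : ∀ n : ℕ, ∃ e : ℕ → L, (V x n)ᶜ ⊆ ⋃ i, A (e i) := by
      intro n
      have hK : IsLindelof (V x n)ᶜ := (hVo n).isClosed_compl.isLindelof
      have hcov : (V x n)ᶜ ⊆ ⋃ y : L, A y := by
        intro y hy
        have hyx : y ≠ x := by rintro rfl; exact hy (hVm n)
        exact mem_iUnion.2 ⟨y, hyA y hyx⟩
      obtain ⟨r, hrc, hrs⟩ := hK.elim_countable_subcover A hAo hcov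
      rcases r.eq_empty_or_nonempty with rfl | hne
      · exact ⟨fun _ => x, fun y hy => absurd (hrs hy) (by simp)⟩
      · obtain ⟨e, he⟩ := hrc.exists_eq_range hne
        refine ⟨e, fun y hy => ?_⟩
        have h4 := hrs hy
        rw [he] at h4
        simpa using h4
    choose e he using cov
    refine ⟨fun m => V x (Nat.unpair m).1 ∩ Bx (e (Nat.unpair m).1 (Nat.unpair m).2),
      fun m => (hVo _).inter (hBo _), fun m => ⟨hVm _, hxB _⟩, ?_⟩
    apply Subset.antisymm
    · intro z hz
      simp only [mem_iInter] at hz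
      have hzV : ∀ n, z ∈ V x n := by
        intro n
        by_contra hzn
        obtain ⟨i, hi⟩ := mem_iUnion.mp (he n hzn)
        have h1 := hz (Nat.pair n i)
        simp only [Nat.unpair_pair] at h1
        have h2 : z ∈ closure (Bx (e n i)) := closure_mono inter_subset_right h1
        have h3 : z ∈ closure (A (e n i) ∩ Bx (e n i)) :=
          (hAo _).inter_closure ⟨hi, h2⟩
        rw [hAB, closure_empty] at h3
        exact h3
      have h5 : z ∈ ⋂ n, V x n := mem_iInter.2 hzV
      rw [hVi] at h5
      exact h5
    · intro z hz
      rw [mem_singleton_iff] at hz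
      subst hz
      exact mem_iInter.2 fun m => subset_closure ⟨hVm _, hxB _⟩
  choose W h1 h2 h3 using key
  exact ⟨W, fun x => ⟨h1 x, h2 x, h3 x⟩⟩

/-- With a closed pseudobase, closures of countable sets have size at most continuum. -/
lemma mk_closure_le_of_countable (W : L → ℕ → Set L)
    (hWo : ∀ x n, IsOpen (W x n)) (hWm : ∀ x n, x ∈ W x n)
    (hWi : ∀ x, (⋂ n, closure (W x n)) = {x})
    {B : Set L} (hB : B.Countable) : #(closure B) ≤ continuum := by
  have hinj : ∀ x ∈ closure B, ∀ y ∈ closure B,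
      (∀ n, B ∩ W x n = B ∩ W y n) → x = y := by
    intro x hx y hy h
    have hy2 : y ∈ ⋂ n, closure (W x n) := by
      refine mem_iInter.2 fun n => ?_
      have h1 : y ∈ closure (W y n ∩ B) := (hWo y n).inter_closure ⟨hWm y n, hy⟩
      have h2 : W y n ∩ B = W x n ∩ B := by
        rw [inter_comm (W y n) B, inter_comm (W x n) B]
        exact (h n).symm
      rw [h2] at h1
      exact closure_mono inter_subset_left h1
    rw [hWi x] at hy2
    exact (eq_of_mem_singleton hy2).symm
  have := hB.to_subtype
  let Φ : ↥(closure B) → (ℕ → Set ↥B) := fun x n => {b | (b : L) ∈ W x n}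
  have hΦ : Function.Injective Φ := by
    intro x y hxy
    apply Subtype.ext
    refine hinj _ x.2 _ y.2 fun n => ?_
    ext b
    simp only [mem_inter_iff, and_congr_right_iff]
    intro hb
    exact Set.ext_iff.mp (congrFun hxy n) ⟨b, hb⟩
  calc #(closure B) ≤ #(ℕ → Set ↥B) := mk_le_of_injective hΦ
    _ = #(Set ↥B) ^ (ℵ₀ : Cardinal) := by rw [mk_arrow]; simp
    _ = (2 ^ #↥B) ^ (ℵ₀ : Cardinal) := by rw [mk_set]
    _ ≤ (2 ^ (ℵ₀ : Cardinal)) ^ (ℵ₀ : Cardinal) :=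
        power_le_power_right (power_le_power_left two_ne_zero mk_le_aleph0)
    _ = continuum := by rw [two_power_aleph0, continuum_power_aleph0]

/-- With countable tightness and a closed pseudobase, closures of sets of size at most
continuum have size at most continuum. -/
lemma mk_closure_le (ht : CountableTightness L) (W : L → ℕ → Set L)
    (hWo : ∀ x n, IsOpen (W x n)) (hWm : ∀ x n, x ∈ W x n)
    (hWi : ∀ x, (⋂ n, closure (W x n)) = {x})
    {S : Set L} (hS : #S ≤ continuum) : #(closure S) ≤ continuum := by
  classical
  let o2s : Option L → Set L := fun o => o.elim ∅ (fun a => {a})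
  let Bs : (ℕ → Option ↥S) → Set L := fun h => ⋃ k, o2s ((h k).map (Subtype.val))
  have hBc : ∀ h, (Bs h).Countable := by
    intro h
    refine countable_iUnion fun k => ?_
    cases (h k).map (Subtype.val) with
    | none => exact countable_empty
    | some a => exact countable_singleton a
  have hcover : closure S ⊆ ⋃ h : (ℕ → Option ↥S), closure (Bs h) := by
    intro x hx
    obtain ⟨B, hBS, hBc', hxB⟩ := ht S x hx
    rcases B.eq_empty_or_nonempty with rfl | hne
    · rw [closure_empty] at hxB; exact absurd hxB (notMem_empty x)
    obtain ⟨e, he⟩ := hBc'.exists_eq_range hne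
    have hs : ∀ k, e k ∈ S := fun k => hBS (he ▸ mem_range_self k)
    refine mem_iUnion.2 ⟨fun k => some ⟨e k, hs k⟩, ?_⟩
    have hBs : Bs (fun k => some ⟨e k, hs k⟩) = B := by
      rw [he]
      ext z
      simp [Bs, o2s, eq_comm]
    rw [hBs]
    exact hxB
  calc #(closure S) ≤ #(⋃ h : (ℕ → Option ↥S), closure (Bs h)) :=
        mk_le_mk_of_subset hcover
    _ ≤ #(ℕ → Option ↥S) * ⨆ h, #(closure (Bs h)) := mk_iUnion_le _
    _ ≤ continuum * continuum := by
        refine mul_le_mul' ?_ (ciSup_le' fun h =>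
          mk_closure_le_of_countable W hWo hWm hWi (hBc h))
        calc #(ℕ → Option ↥S) = (#(Option ↥S)) ^ (ℵ₀ : Cardinal) := by
              rw [mk_arrow]; simp
          _ ≤ continuum ^ (ℵ₀ : Cardinal) := by
              refine power_le_power_right ?_
              rw [mk_option]
              calc #↥S + 1 ≤ continuum + continuum :=
                    add_le_add hS (one_le_aleph0.trans aleph0_le_continuum)
                _ = continuum := add_eq_self aleph0_le_continuum
          _ = continuum := continuum_power_aleph0
    _ = continuum := mul_eq_self aleph0_le_continuum

/-- Šapirovskii / Arhangelskii: a Lindelöf T2 space with countable pseudocharacter and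
countable tightness has cardinality at most continuum. -/
theorem mk_le_continuum_of_lindelof [T2Space L] [LindelofSpace L]
    (hpsi : CountablePseudocharacter L) (ht : CountableTightness L) :
    #L ≤ continuum := by
  classical
  rcases isEmpty_or_nonempty L with hL | hL
  · rw [mk_eq_zero L]; exact zero_le
  obtain ⟨p₀⟩ := hL
  obtain ⟨V, hV⟩ := exists_pseudobase_fun hpsi
  obtain ⟨W, hW⟩ := exists_closed_pseudobase hpsi
  let W₁ := (Order.succ (ℵ₀ : Cardinal.{u})).ord.ToType
  have hW₁ : #W₁ = Order.succ (ℵ₀ : Cardinal.{u}) := by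
    rw [mk_toType, Cardinal.card_ord]
  have hseg : ∀ w : W₁, #(Iio w) ≤ ℵ₀ :=
    fun w => Order.lt_succ_iff.mp (mk_Iio_ord_toType w)
  have hbdd : ∀ s : Set W₁, s.Countable → ∃ ub, ∀ a ∈ s, a < ub := by
    intro s hs
    by_contra hno
    push_neg at hno
    have hcov : (Set.univ : Set W₁) ⊆ ⋃ a : ↥s, Iic a.1 := by
      intro b _
      obtain ⟨a, ha, hba⟩ := hno b
      exact mem_iUnion.2 ⟨⟨a, ha⟩, hba⟩
    have := hs.to_subtype
    have hIic : ∀ a : W₁, #(Iic a) ≤ ℵ₀ := by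
      intro a
      have hsub : Iic a ⊆ insert a (Iio a) := by
        intro v hv
        rcases eq_or_lt_of_le (mem_Iic.mp hv) with h | h
        · exact mem_insert_iff.2 (Or.inl h)
        · exact mem_insert_iff.2 (Or.inr h)
      calc #(Iic a) ≤ #(insert a (Iio a) : Set W₁) := mk_le_mk_of_subset hsub
        _ ≤ #(Iio a) + 1 := mk_insert_le
        _ ≤ ℵ₀ + ℵ₀ := add_le_add (hseg a) one_le_aleph0
        _ = ℵ₀ := add_eq_self le_rfl
    have hle : #W₁ ≤ ℵ₀ := by
      calc #W₁ = #(Set.univ : Set W₁) := mk_univ.symm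
        _ ≤ #(⋃ a : ↥s, Iic a.1) := mk_le_mk_of_subset hcov
        _ ≤ sum (fun a : ↥s => #(Iic a.1)) := mk_iUnion_le_sum_mk
        _ ≤ sum (fun _ : ↥s => ℵ₀) := sum_le_sum _ _ (fun a => hIic a.1)
        _ = #↥s * ℵ₀ := sum_const' _ _
        _ ≤ ℵ₀ * ℵ₀ := mul_le_mul' mk_le_aleph0 le_rfl
        _ = ℵ₀ := aleph0_mul_aleph0
    rw [hW₁] at hle
    exact absurd (Order.succ_le_iff.mp hle) (lt_irrefl _)
  -- the operator g
  let zf : (ℕ → L × ℕ) → L := fun h =>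
    if hne : ((⋃ k, V (h k).1 (h k).2)ᶜ).Nonempty then hne.choose else p₀
  let g : Set L → Set L := fun S =>
    closure (insert p₀ S ∪ zf '' {h | ∀ k, (h k).1 ∈ S})
  have hgsub : ∀ S, S ⊆ g S := fun S =>
    ((subset_insert _ _).trans subset_union_left).trans subset_closure
  have hgp₀ : ∀ S, p₀ ∈ g S := fun S =>
    subset_closure (Or.inl (mem_insert _ _))
  have hgclosed : ∀ S, IsClosed (g S) := fun S => isClosed_closure
  have hgz : ∀ (S : Set L) (h : ℕ → L × ℕ), (∀ k, (h k).1 ∈ S) →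
      ((⋃ k, V (h k).1 (h k).2)ᶜ).Nonempty →
      zf h ∈ g S ∧ zf h ∉ ⋃ k, V (h k).1 (h k).2 := by
    intro S h hh hne
    refine ⟨subset_closure (Or.inr ⟨h, hh, rfl⟩), ?_⟩
    have hzf : zf h = hne.choose := dif_pos hne
    rw [hzf]
    exact hne.choose_spec
  have hgcard : ∀ S : Set L, #S ≤ continuum → #(g S) ≤ continuum := by
    intro S hS
    have h1 : #{h : ℕ → L × ℕ | ∀ k, (h k).1 ∈ S} ≤ continuum := by
      let φ : ↥{h : ℕ → L × ℕ | ∀ k, (h k).1 ∈ S} → (ℕ → ↥S × ℕ) :=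
        fun h k => (⟨(h.1 k).1, h.2 k⟩, (h.1 k).2)
      have hφ : Function.Injective φ := by
        intro a b hab
        apply Subtype.ext; funext k
        have h1 := congrFun hab k
        have h2 : ((a.1 k).1 : L) = (b.1 k).1 := congrArg (fun p => (p.1.1 : L)) h1
        have h3 : (a.1 k).2 = (b.1 k).2 := congrArg (fun p : ↥S × ℕ => p.2) h1
        exact Prod.ext h2 h3
      calc #{h : ℕ → L × ℕ | ∀ k, (h k).1 ∈ S} ≤ #(ℕ → ↥S × ℕ) :=
            mk_le_of_injective hφ
        _ = #(↥S × ℕ) ^ (ℵ₀ : Cardinal) := by rw [mk_arrow]; simp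
        _ ≤ continuum ^ (ℵ₀ : Cardinal) := by
            refine power_le_power_right ?_
            calc #(↥S × ℕ) = #↥S * ℵ₀ := by simp [mk_prod]
              _ ≤ continuum * continuum := mul_le_mul' hS aleph0_le_continuum
              _ = continuum := mul_eq_self aleph0_le_continuum
        _ = continuum := continuum_power_aleph0
    have h2 : #(insert p₀ S ∪ zf '' {h | ∀ k, (h k).1 ∈ S} : Set L) ≤ continuum := by
      calc #(insert p₀ S ∪ zf '' {h | ∀ k, (h k).1 ∈ S} : Set L)
          ≤ #(insert p₀ S : Set L) + #(zf '' {h | ∀ k, (h k).1 ∈ S}) := mk_union_le _ _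
        _ ≤ (#S + 1) + continuum :=
            add_le_add mk_insert_le (mk_image_le.trans h1)
        _ ≤ (continuum + continuum) + continuum :=
            add_le_add (add_le_add hS (one_le_aleph0.trans aleph0_le_continuum)) le_rfl
        _ = continuum := by rw [add_eq_self aleph0_le_continuum, add_eq_self aleph0_le_continuum]
    exact mk_closure_le ht W (fun x => (hW x).1) (fun x => (hW x).2.1)
      (fun x => (hW x).2.2) h2
  -- the chain
  let F : W₁ → Set L :=
    WellFoundedLT.fix (fun w ih => g (⋃ v : {v : W₁ // v < w}, ih v v.2))
  have hFeq : ∀ w, F w = g (⋃ v : {v : W₁ // v < w}, F v.1) :=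
    WellFoundedLT.fix_eq _
  have hmono : ∀ v w : W₁, v < w → F v ⊆ F w := by
    intro v w hvw
    rw [hFeq w]
    exact (subset_iUnion (fun v : {v : W₁ // v < w} => F v.1) ⟨v, hvw⟩).trans (hgsub _)
  have hFcard : ∀ w, #(F w) ≤ continuum := by
    intro w
    refine WellFoundedLT.induction (motive := fun w => #(F w) ≤ continuum) w ?_
    intro w ih
    rw [hFeq w]
    refine hgcard _ ?_
    calc #(⋃ v : {v : W₁ // v < w}, F v.1)
        ≤ sum (fun v : {v : W₁ // v < w} => #(F v.1)) := mk_iUnion_le_sum_mk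
      _ ≤ sum (fun _ : {v : W₁ // v < w} => continuum) :=
          sum_le_sum _ _ (fun v => ih v.1 v.2)
      _ = #{v : W₁ // v < w} * continuum := sum_const' _ _
      _ ≤ ℵ₀ * continuum := mul_le_mul' (hseg w) le_rfl
      _ ≤ continuum * continuum := mul_le_mul' aleph0_le_continuum le_rfl
      _ = continuum := mul_eq_self aleph0_le_continuum
  set Finf : Set L := ⋃ w, F w with hFinf
  have hstage : ∀ B : Set L, B.Countable → B ⊆ Finf → ∃ w, B ⊆ F w := by
    intro B hB hBF
    have hst : ∀ b : ↥B, ∃ w, (b : L) ∈ F w := fun b => mem_iUnion.mp (hBF b.2)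
    choose st hst' using hst
    have := hB.to_subtype
    obtain ⟨ub, hub⟩ := hbdd (Set.range st) (countable_range st)
    exact ⟨ub, fun b hb =>
      hmono _ _ (hub (st ⟨b, hb⟩) (mem_range_self _)) (hst' ⟨b, hb⟩)⟩
  have hFclosed : ∀ w, IsClosed (F w) := by
    intro w
    rw [hFeq w]
    exact hgclosed _
  have hFinfclosed : IsClosed Finf := by
    refine isClosed_of_closure_subset ?_
    intro x hx
    obtain ⟨B, hBF, hBc, hxB⟩ := ht Finf x hx
    obtain ⟨w, hw⟩ := hstage B hBc hBF
    have hx2 : x ∈ closure (F w) := closure_mono hw hxB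
    rw [(hFclosed w).closure_eq] at hx2
    exact mem_iUnion.2 ⟨w, hx2⟩
  have hW₁ne : Nonempty W₁ := by
    rw [← mk_ne_zero_iff, hW₁]
    intro h0
    exact aleph0_ne_zero (le_zero_iff.mp (h0 ▸ Order.le_succ (ℵ₀ : Cardinal.{u})))
  have huniv : Finf = Set.univ := by
    by_contra hne
    obtain ⟨y, hy⟩ := (ne_univ_iff_exists_notMem _).mp hne
    let nsel : L → ℕ := fun x => if h : ∃ n, y ∉ V x n then h.choose else 0
    have hnsel : ∀ x ∈ Finf, y ∉ V x (nsel x) := by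
      intro x hx
      have hxy : y ≠ x := by rintro rfl; exact hy hx
      have hex : ∃ n, y ∉ V x n := by
        by_contra hc
        push_neg at hc
        have hmem : y ∈ ⋂ n, V x n := mem_iInter.2 hc
        rw [(hV x).2.2] at hmem
        exact hxy hmem
      have hd : nsel x = hex.choose := dif_pos hex
      rw [hd]
      exact hex.choose_spec
    have hLin : IsLindelof Finf := hFinfclosed.isLindelof
    have hcov : Finf ⊆ ⋃ x : ↥Finf, V x.1 (nsel x.1) :=
      fun x hx => mem_iUnion.2 ⟨⟨x, hx⟩, (hV x).2.1 _⟩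
    obtain ⟨r, hrc, hrs⟩ :=
      hLin.elim_countable_subcover (fun x : ↥Finf => V x.1 (nsel x.1))
        (fun x => (hV x.1).1 _) hcov
    obtain ⟨w₀⟩ := hW₁ne
    have hp₀ : p₀ ∈ Finf := mem_iUnion.2 ⟨w₀, by rw [hFeq w₀]; exact hgp₀ _⟩
    have hrne : r.Nonempty := by
      rcases r.eq_empty_or_nonempty with rfl | h
      · have := hrs hp₀
        simp at this
      · exact h
    obtain ⟨e, he⟩ := hrc.exists_eq_range hrne
    have hBc : (Set.range fun k => ((e k : ↥Finf) : L)).Countable := countable_range _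
    have hBF : (Set.range fun k => ((e k : ↥Finf) : L)) ⊆ Finf := by
      rintro _ ⟨k, rfl⟩
      exact (e k).2
    obtain ⟨w₁, hw₁⟩ := hstage _ hBc hBF
    obtain ⟨w₂, hw₂⟩ := hbdd {w₁} (countable_singleton _)
    have hw₁₂ : w₁ < w₂ := hw₂ w₁ rfl
    let h : ℕ → L × ℕ := fun k => (((e k : ↥Finf) : L), nsel ((e k : ↥Finf) : L))
    have hh : ∀ k, (h k).1 ∈ ⋃ v : {v : W₁ // v < w₂}, F v.1 := by
      intro k
      have hk : ((e k : ↥Finf) : L) ∈ F w₁ := hw₁ (mem_range_self k)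
      exact mem_iUnion.2 ⟨⟨w₁, hw₁₂⟩, hk⟩
    have hcne : ((⋃ k, V (h k).1 (h k).2)ᶜ).Nonempty := by
      refine ⟨y, ?_⟩
      simp only [mem_compl_iff, mem_iUnion, not_exists]
      intro k
      exact hnsel _ (e k).2
    obtain ⟨hz1, hz2⟩ := hgz _ h hh hcne
    have hzF : zf h ∈ Finf := mem_iUnion.2 ⟨w₂, by rw [hFeq w₂]; exact hz1⟩
    have hzcov := hrs hzF
    rw [he, biUnion_range] at hzcov
    exact hz2 hzcov
  calc #L = #(Set.univ : Set L) := mk_univ.symm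
    _ = #Finf := by rw [huniv]
    _ ≤ sum (fun w : W₁ => #(F w)) := mk_iUnion_le_sum_mk
    _ ≤ sum (fun _ : W₁ => continuum) := sum_le_sum _ _ hFcard
    _ = #W₁ * continuum := sum_const' _ _
    _ ≤ continuum * continuum :=
        mul_le_mul' (by rw [hW₁]; exact Order.succ_le_of_lt aleph0_lt_continuum) le_rfl
    _ = continuum := mul_eq_self aleph0_le_continuum

lemma countablePseudocharacter_subtype {X : Type u} [TopologicalSpace X]
    (hpsi : CountablePseudocharacter X) (s : Set X) :
    CountablePseudocharacter ↥s := by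
  intro x
  obtain ⟨𝒰, hc, hmem, hint⟩ := hpsi (x : X)
  refine ⟨(fun U => Subtype.val ⁻¹' U) '' 𝒰, hc.image _, ?_, ?_⟩
  · rintro _ ⟨U, hU, rfl⟩
    exact ⟨(hmem U hU).1.preimage continuous_subtype_val, (hmem U hU).2⟩
  · rw [sInter_image]
    ext z
    simp only [mem_iInter, mem_preimage, mem_singleton_iff]
    constructor
    · intro hz
      have : (z : X) ∈ ⋂₀ 𝒰 := fun U hU => hz U hU
      rw [hint] at this
      exact Subtype.ext this
    · rintro rfl U hU
      exact (hmem U hU).2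

lemma countableTightness_subtype {X : Type u} [TopologicalSpace X]
    (ht : CountableTightness X) (s : Set X) :
    CountableTightness ↥s := by
  intro A x hx
  rw [closure_subtype] at hx
  obtain ⟨B, hBA, hBc, hxB⟩ := ht _ _ hx
  refine ⟨{a ∈ A | (a : X) ∈ B}, fun a ha => ha.1, ?_, ?_⟩
  · exact ((hBc.preimage Subtype.val_injective).mono
      (fun a ha => ha.2 : {a ∈ A | (a : X) ∈ B} ⊆ Subtype.val ⁻¹' B))
  · rw [closure_subtype]
    have himg : Subtype.val '' {a ∈ A | (a : X) ∈ B} = B := by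
      ext b
      constructor
      · rintro ⟨a, ⟨_, hab⟩, rfl⟩; exact hab
      · intro hb
        obtain ⟨a, ha, rfl⟩ := hBA hb
        exact ⟨a, ⟨ha, hb⟩, rfl⟩
    rw [himg]
    exact hxB

end Aux

section ER

/-- Erdős–Rado style lemma: a coloring of the pairs of a well-ordered set of size
greater than `2 ^ 𝔠` by countably many colors has a homogeneous set of size `> 𝔠`. -/
lemma erdos_rado_pairs {T : Type u} [LinearOrder T] [WellFoundedLT T]
    (hT : 2 ^ continuum < #T) (f : T → T → ℕ) :
    ∃ (H : Set T) (m : ℕ), continuum < #H ∧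
      ∀ a ∈ H, ∀ b ∈ H, a < b → f a b = m := by
  classical
  let Wκ := (Order.succ (continuum : Cardinal.{u})).ord.ToType
  have hWκ : #Wκ = Order.succ (continuum : Cardinal.{u}) := by
    rw [mk_toType, Cardinal.card_ord]
  have hseg : ∀ w : Wκ, #(Iio w) ≤ continuum :=
    fun w => Order.lt_succ_iff.mp (mk_Iio_ord_toType w)
  have hWκne : Nonempty Wκ := by
    rw [← mk_ne_zero_iff, hWκ]
    intro h0
    exact continuum_ne_zero (le_zero_iff.mp (h0 ▸ Order.le_succ (continuum : Cardinal.{u})))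
  inhabit Wκ
  -- the recursive sequence
  let seq : T → Wκ → T := fun y =>
    WellFoundedLT.fix (fun w ih =>
      if h : {t : T | ∀ (v) (hv : v < w), f (ih v hv) t = f (ih v hv) y ∧
          t ≠ ih v hv}.Nonempty then
        wellFounded_lt.min _ h else y)
  let Cs : T → Wκ → Set T := fun y w =>
    {t : T | ∀ (v) (hv : v < w), f (seq y v) t = f (seq y v) y ∧ t ≠ seq y v}
  have hseqeq : ∀ y w, seq y w =
      if h : (Cs y w).Nonempty then wellFounded_lt.min _ h else y :=
    fun y w => WellFoundedLT.fix_eq _ w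
  -- the stopping time
  let b : T → Wκ := fun y =>
    if h : {w : Wκ | seq y w = y}.Nonempty then wellFounded_lt.min _ h else default
  have hbP : ∀ y : T, (∃ w, seq y w = y) →
      seq y (b y) = y ∧ ∀ v, v < b y → seq y v ≠ y := by
    intro y h
    have hne : {w : Wκ | seq y w = y}.Nonempty := h
    have hb : b y = wellFounded_lt.min _ hne := dif_pos hne
    constructor
    · rw [hb]; exact wellFounded_lt.min_mem _ hne
    · intro v hv hvy
      rw [hb] at hv
      exact wellFounded_lt.not_lt_min _ (show v ∈ {w : Wκ | seq y w = y} from hvy) hv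
  -- the bad set and its coding
  let Bad : Set T := {y | ∃ w, seq y w = y}
  let code : ↥Bad → Σ w : Wκ, ({v : Wκ // v < w} → ℕ) :=
    fun y => ⟨b y.1, fun v => f (seq y.1 v.1) y.1⟩
  have hinj : Function.Injective code := by
    intro y y' hcode
    have hfst : b y.1 = b y'.1 := congrArg Sigma.fst hcode
    have hfun : ∀ v : Wκ, v < b y.1 → f (seq y.1 v) y.1 = f (seq y'.1 v) y'.1 := by
      intro v hv
      have hv' : v < b y'.1 := hfst ▸ hv
      have h2 := congrArg (fun p : Σ w : Wκ, ({v : Wκ // v < w} → ℕ) =>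
        if h : v < p.1 then p.2 ⟨v, h⟩ else 0) hcode
      simpa only [code, dif_pos hv, dif_pos hv'] using h2
    obtain ⟨hby, hbmin⟩ := hbP y.1 y.2
    obtain ⟨hby', hbmin'⟩ := hbP y'.1 y'.2
    have hall : ∀ v : Wκ, v ≤ b y.1 → seq y.1 v = seq y'.1 v := by
      intro v
      refine WellFoundedLT.induction
        (motive := fun v => v ≤ b y.1 → seq y.1 v = seq y'.1 v) v ?_
      intro v ih hv
      have hCs : Cs y.1 v = Cs y'.1 v := by
        ext t
        constructor
        · intro h u hu
          have ihu := ih u hu ((le_of_lt hu).trans hv)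
          have hfu := hfun u (lt_of_lt_of_le hu hv)
          refine ⟨?_, ?_⟩
          · rw [← hfu, ← ihu]; exact (h u hu).1
          · rw [← ihu]; exact (h u hu).2
        · intro h u hu
          have ihu := ih u hu ((le_of_lt hu).trans hv)
          have hfu := hfun u (lt_of_lt_of_le hu hv)
          refine ⟨?_, ?_⟩
          · rw [hfu, ihu]; exact (h u hu).1
          · rw [ihu]; exact (h u hu).2
      have hyin : y.1 ∈ Cs y.1 v := by
        intro u hu
        exact ⟨rfl, fun e => hbmin u (lt_of_lt_of_le hu hv) e.symm⟩
      have hne : (Cs y'.1 v).Nonempty := hCs ▸ ⟨y.1, hyin⟩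
      rw [hseqeq y.1 v, hseqeq y'.1 v, hCs, dif_pos hne, dif_pos hne]
    apply Subtype.ext
    calc y.1 = seq y.1 (b y.1) := hby.symm
      _ = seq y'.1 (b y.1) := hall _ le_rfl
      _ = seq y'.1 (b y'.1) := by rw [hfst]
      _ = y'.1 := hby'
  -- cardinality of the bad set
  have hac : (ℵ₀ : Cardinal.{u}) * continuum = continuum := by
    rw [mul_eq_max le_rfl aleph0_le_continuum, max_eq_right aleph0_le_continuum]
  have hpow : (continuum : Cardinal.{u}) ^ (continuum : Cardinal.{u}) = 2 ^ continuum := by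
    conv_lhs => rw [← two_power_aleph0]
    rw [← power_mul, two_power_aleph0, hac]
  have haleone : (ℵ₀ : Cardinal.{u}) ≤ 2 ^ continuum :=
    aleph0_le_continuum.trans (cantor continuum).le
  have hbad : #Bad ≤ 2 ^ continuum := by
    calc #Bad ≤ #(Σ w : Wκ, ({v : Wκ // v < w} → ℕ)) := mk_le_of_injective hinj
      _ = sum (fun w : Wκ => #({v : Wκ // v < w} → ℕ)) := mk_sigma _
      _ ≤ sum (fun _ : Wκ => 2 ^ continuum) := by
          refine sum_le_sum _ _ fun w => ?_
          calc #({v : Wκ // v < w} → ℕ) = (ℵ₀ : Cardinal) ^ #{v : Wκ // v < w} := by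
                rw [mk_arrow]; simp
            _ ≤ continuum ^ #{v : Wκ // v < w} :=
                power_le_power_right aleph0_le_continuum
            _ ≤ continuum ^ (continuum : Cardinal.{u}) :=
                power_le_power_left continuum_ne_zero (hseg w)
            _ = 2 ^ continuum := hpow
      _ = #Wκ * 2 ^ continuum := sum_const' _ _
      _ ≤ (2 ^ continuum) * (2 ^ continuum) :=
          mul_le_mul' (by rw [hWκ]; exact Order.succ_le_of_lt (cantor _)) le_rfl
      _ = 2 ^ continuum := mul_eq_self haleone
  -- pick a good point
  have hgoody : ∃ y : T, y ∉ Bad := by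
    by_contra hc
    push_neg at hc
    have hTB : #T ≤ #Bad := by
      rw [← mk_univ (α := T)]
      exact mk_le_mk_of_subset fun t _ => hc t
    exact absurd (hTB.trans hbad) (not_le.mpr hT)
  obtain ⟨y, hy⟩ := hgoody
  have hgood : ∀ w, seq y w ≠ y := fun w hw => hy ⟨w, hw⟩
  have hmem : ∀ w, seq y w ∈ Cs y w := by
    intro w
    have hyin : y ∈ Cs y w := fun u _ => ⟨rfl, fun e => hgood u e.symm⟩
    have hne : (Cs y w).Nonempty := ⟨y, hyin⟩
    rw [hseqeq y w, dif_pos hne]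
    exact wellFounded_lt.min_mem _ hne
  have hcompat : ∀ v w : Wκ, v < w →
      f (seq y v) (seq y w) = f (seq y v) y ∧ seq y w ≠ seq y v :=
    fun v w hvw => hmem w v hvw
  have hsmono : StrictMono (seq y) := by
    intro v w hvw
    have h1 : seq y w ∈ Cs y v := fun u hu => hmem w u (hu.trans hvw)
    have hyin : y ∈ Cs y v := fun u _ => ⟨rfl, fun e => hgood u e.symm⟩
    have hne : (Cs y v).Nonempty := ⟨y, hyin⟩
    have h2 : ¬ seq y w < seq y v := by
      rw [hseqeq y v, dif_pos hne]
      exact wellFounded_lt.not_lt_min _ h1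
    exact lt_of_le_of_ne (not_lt.mp h2) (hcompat v w hvw).2.symm
  -- pigeonhole on the colors
  let gcol : Wκ → ℕ := fun w => f (seq y w) y
  have hfib : ∃ m : ℕ, continuum < #(gcol ⁻¹' {m}) := by
    by_contra hc
    push_neg at hc
    have hle : #Wκ ≤ continuum := by
      calc #Wκ = #(Set.univ : Set Wκ) := mk_univ.symm
        _ ≤ #(⋃ m : ULift.{u} ℕ, gcol ⁻¹' {m.down}) :=
            mk_le_mk_of_subset fun w _ => mem_iUnion.2 ⟨⟨gcol w⟩, rfl⟩
        _ ≤ sum (fun m : ULift.{u} ℕ => #(gcol ⁻¹' {m.down})) := mk_iUnion_le_sum_mk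
        _ ≤ sum (fun _ : ULift.{u} ℕ => continuum) := sum_le_sum _ _ fun m => hc _
        _ = #(ULift.{u} ℕ) * continuum := sum_const' _ _
        _ = ℵ₀ * continuum := by rw [mk_uLift]; simp
        _ = continuum := hac
    rw [hWκ] at hle
    exact absurd (Order.succ_le_iff.mp hle) (lt_irrefl _)
  obtain ⟨m, hm⟩ := hfib
  refine ⟨seq y '' (gcol ⁻¹' {m}), m, ?_, ?_⟩
  · rwa [mk_image_eq_of_injOn _ _ (hsmono.injective.injOn)]
  · rintro a ⟨v, hv, rfl⟩ b ⟨w, hw, rfl⟩ hab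
    have hvw : v < w := by
      rcases lt_trichotomy v w with h | h | h
      · exact h
      · subst h; exact absurd hab (lt_irrefl _)
      · exact absurd (hsmono h) (asymm hab)
    rw [(hcompat v w hvw).1]
    exact hv

end ER

/-- An almost discretely Lindelöf Hausdorff space with countable pseudocharacter
and countable tightness has cardinality at most `2 ^ 𝔠`. -/
theorem almostDiscretelyLindelof_card_le
    (X : Type u) [TopologicalSpace X] [T2Space X]
    (hadl : AlmostDiscretelyLindelof X) (hpsi : CountablePseudocharacter X)
    (ht : CountableTightness X) :
    #X ≤ 2 ^ Cardinal.continuum := by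
  classical
  by_contra hlt
  push_neg at hlt
  -- every discrete subset has size at most continuum
  have hdisc : ∀ D : Set X, DiscreteTopology ↥D → #D ≤ continuum := by
    intro D hD
    obtain ⟨Lset, hDL, hLin⟩ := hadl D hD
    haveI : LindelofSpace ↥Lset := isLindelof_iff_LindelofSpace.mp hLin
    have hL : #↥Lset ≤ continuum :=
      mk_le_continuum_of_lindelof (countablePseudocharacter_subtype hpsi Lset)
        (countableTightness_subtype ht Lset)
    exact (mk_le_mk_of_subset hDL).trans hL
  obtain ⟨V, hV⟩ := exists_pseudobase_fun hpsi
  let c : X → X → ℕ := fun x y => if h : ∃ n, y ∉ V x n then h.choose else 0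
  have hc : ∀ x y : X, y ≠ x → y ∉ V x (c x y) := by
    intro x y hyx
    have hex : ∃ n, y ∉ V x n := by
      by_contra hcon
      push_neg at hcon
      have hmem : y ∈ ⋂ n, V x n := mem_iInter.2 hcon
      rw [(hV x).2.2] at hmem
      exact hyx hmem
    have hd : c x y = hex.choose := dif_pos hex
    rw [hd]
    exact hex.choose_spec
  let T := (Order.succ (2 ^ continuum : Cardinal.{u})).ord.ToType
  have hTcard : #T = Order.succ (2 ^ continuum : Cardinal.{u}) := by
    rw [mk_toType, Cardinal.card_ord]
  have hTX : #T ≤ #X := by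
    rw [hTcard]
    exact Order.succ_le_of_lt hlt
  obtain ⟨e⟩ := (Cardinal.le_def T X).mp hTX
  have hT2 : 2 ^ continuum < #T := by
    rw [hTcard]
    exact Order.lt_succ_iff.mpr le_rfl
  let fc : T → T → ℕ := fun a b => Nat.pair (c (e a) (e b)) (c (e b) (e a))
  obtain ⟨H, m, hHcard, hHom⟩ := erdos_rado_pairs hT2 fc
  set D : Set X := e '' H with hD
  have hDcard : continuum < #D := by rwa [mk_image_eq e.injective]
  have hsep : ∀ x ∈ D, ∃ U : Set X, IsOpen U ∧ U ∩ D = {x} := by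
    rintro _ ⟨a, ha, rfl⟩
    refine ⟨V (e a) (Nat.unpair m).1 ∩ V (e a) (Nat.unpair m).2,
      ((hV _).1 _).inter ((hV _).1 _), ?_⟩
    apply Subset.antisymm
    · rintro z ⟨⟨hzi, hzj⟩, ⟨bb, hbb, rfl⟩⟩
      by_contra hne
      have hne' : e bb ≠ e a := fun hh => hne hh
      have hab : bb ≠ a := fun hh => hne' (congrArg e hh)
      rcases hab.lt_or_gt with h | h
      · -- bb < a : fc bb a = m, so c (e a) (e bb) = (unpair m).2
        have hm := hHom bb hbb a ha h
        have h1 : c (e a) (e bb) = (Nat.unpair m).2 := by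
          rw [← hm]
          simp [fc, Nat.unpair_pair]
        have h2 := hc (e a) (e bb) hne'
        rw [h1] at h2
        exact h2 hzj
      · -- a < bb : fc a bb = m, so c (e a) (e bb) = (unpair m).1
        have hm := hHom a ha bb hbb h
        have h1 : c (e a) (e bb) = (Nat.unpair m).1 := by
          rw [← hm]
          simp [fc, Nat.unpair_pair]
        have h2 := hc (e a) (e bb) hne'
        rw [h1] at h2
        exact h2 hzi
    · intro z hz
      rw [mem_singleton_iff] at hz
      subst hz
      exact ⟨⟨(hV _).2.1 _, (hV _).2.1 _⟩, mem_image_of_mem e ha⟩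
  have hDdisc : DiscreteTopology ↥D := by
    rw [discreteTopology_iff_isOpen_singleton]
    intro x
    obtain ⟨U, hUo, hUD⟩ := hsep x.1 x.2
    have hxU : ({x} : Set ↥D) = Subtype.val ⁻¹' U := by
      ext z
      simp only [mem_singleton_iff, mem_preimage]
      constructor
      · rintro rfl
        have hmem : (z : X) ∈ U ∩ D := by
          rw [hUD]
          exact mem_singleton _
        exact hmem.1
      · intro hz
        apply Subtype.ext
        have hmem : (z : X) ∈ U ∩ D := ⟨hz, z.2⟩
        rw [hUD] at hmem
        exact hmem
    rw [hxU]
    exact hUo.preimage continuous_subtype_val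
  exact absurd (hdisc D hDdisc) (not_le.mpr hDcard)
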